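/- Let A and Ã be n×n real symmetric matrices with det(xI−A)=det(xI−Ã) and det(xI−(J−I−A))=det(xI−(J−I−Ã)). Then for every real number λ that is not an eigenvalue of A (so that λI−A and λI−Ã are invertible), one has eᵀ(λI−A)^{−1}e = eᵀ(λI−Ã)^{−1}e. -/

import Mathlib

open Matrix Polynomial

lemma eval_charpoly' {n : ℕ} (M : Matrix (Fin n) (Fin n) ℝ) (t : ℝ) :
    M.charpoly.eval t = (t • (1 : Matrix (Fin n) (Fin n) ℝ) - M).det := by
  rw [Matrix.charpoly, eval_det, matPolyEquiv_charmatrix]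
  simp [Matrix.scalar, smul_eq_diagonal_mul]
  rfl

theorem stmt8 {n : ℕ} (A At : Matrix (Fin n) (Fin n) ℝ)
    (hA : A.IsSymm) (hAt : At.IsSymm)
    (h1 : A.charpoly = At.charpoly)
    (h2 : ((Matrix.of fun _ _ => (1 : ℝ)) - 1 - A).charpoly
        = ((Matrix.of fun _ _ => (1 : ℝ)) - 1 - At).charpoly) :
    ∀ t : ℝ, (t • (1 : Matrix (Fin n) (Fin n) ℝ) - A).det ≠ 0 →
      (fun _ => (1 : ℝ)) ⬝ᵥ ((t • (1 : Matrix (Fin n) (Fin n) ℝ) - A)⁻¹ *ᵥ fun _ => (1 : ℝ))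
        = (fun _ => (1 : ℝ)) ⬝ᵥ ((t • (1 : Matrix (Fin n) (Fin n) ℝ) - At)⁻¹ *ᵥ fun _ => (1 : ℝ)) := by
  intro t hdet
  let e : Fin n → ℝ := fun _ => (1 : ℝ)
  have hdd : (t • (1 : Matrix (Fin n) (Fin n) ℝ) - A).det
      = (t • (1 : Matrix (Fin n) (Fin n) ℝ) - At).det := by
    rw [← eval_charpoly', ← eval_charpoly', h1]
  have hdet' : (t • (1 : Matrix (Fin n) (Fin n) ℝ) - At).det ≠ 0 := hdd ▸ hdet
  have key : ∀ B : Matrix (Fin n) (Fin n) ℝ,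
      (t • (1 : Matrix (Fin n) (Fin n) ℝ) - B).det ≠ 0 →
      ((t • (1 : Matrix (Fin n) (Fin n) ℝ) - B) + Matrix.of fun _ _ => (1 : ℝ)).det
        = (t • (1 : Matrix (Fin n) (Fin n) ℝ) - B).det
          * (1 + e ⬝ᵥ ((t • (1 : Matrix (Fin n) (Fin n) ℝ) - B)⁻¹ *ᵥ e)) := by
    intro B hB
    have hJ : (Matrix.of fun _ _ => (1 : ℝ) : Matrix (Fin n) (Fin n) ℝ)
        = Matrix.replicateCol Unit e * Matrix.replicateRow Unit e := by
      ext i j; simp [Matrix.mul_apply, e]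
    rw [hJ, Matrix.det_add_replicateCol_mul_replicateRow (isUnit_iff_ne_zero.mpr hB)]
    congr 1
    rw [Matrix.det_unique]
    simp [Matrix.mul_apply, dotProduct, Matrix.mulVec, Finset.mul_sum, Finset.sum_mul]
    rw [Finset.sum_comm]
    exact Finset.sum_congr rfl fun x _ => Finset.sum_congr rfl fun i _ => by ring
  -- equality of det (M + J) from h2 evaluated at -(t+1)
  have h2' := congrArg (eval (-(t + 1))) h2
  rw [eval_charpoly', eval_charpoly'] at h2'
  have eA : (-(t + 1)) • (1 : Matrix (Fin n) (Fin n) ℝ)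
      - ((Matrix.of fun _ _ => (1 : ℝ)) - 1 - A)
      = -((t • (1 : Matrix (Fin n) (Fin n) ℝ) - A) + Matrix.of fun _ _ => (1 : ℝ)) := by
    ext i j
    simp [Matrix.one_apply, Matrix.smul_apply]
    split_ifs <;> ring
  have eAt : (-(t + 1)) • (1 : Matrix (Fin n) (Fin n) ℝ)
      - ((Matrix.of fun _ _ => (1 : ℝ)) - 1 - At)
      = -((t • (1 : Matrix (Fin n) (Fin n) ℝ) - At) + Matrix.of fun _ _ => (1 : ℝ)) := by
    ext i j
    simp [Matrix.one_apply, Matrix.smul_apply]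
    split_ifs <;> ring
  rw [eA, eAt, Matrix.det_neg, Matrix.det_neg] at h2'
  have hJeq : ((t • (1 : Matrix (Fin n) (Fin n) ℝ) - A) + Matrix.of fun _ _ => (1 : ℝ)).det
      = ((t • (1 : Matrix (Fin n) (Fin n) ℝ) - At) + Matrix.of fun _ _ => (1 : ℝ)).det :=
    mul_left_cancel₀ (by positivity) h2'
  rw [key A hdet, key At hdet', ← hdd] at hJeq
  have := mul_left_cancel₀ hdet hJeq
  linarith [this]
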